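/- The Wronskian polynomial W satisfies W(0) = 1, −W′(0) = Σ_{n=1}^N ω_n, and −W″(0) = Σ_{n=1}^N Σ_{k=1}^N ( e^{−|x_n − x_k|} − 1 ) ω_n ω_k + 2 Σ_{n=1}^N υ_n. -/

import Mathlib

open scoped BigOperators
open Polynomial

/-- Transfer matrix across an interval of length `d` for `-f'' + (1/4) f = 0`. -/
noncomputable def Tmat (d : ℝ) : Matrix (Fin 2) (Fin 2) ℂ :=
  !![Complex.cosh ((d : ℂ) / 2), 2 * Complex.sinh ((d : ℂ) / 2);
     (1 / 2) * Complex.sinh ((d : ℂ) / 2), Complex.cosh ((d : ℂ) / 2)]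

/-- Interface matrix at a point carrying weight `w` and dipole `v`. -/
noncomputable def Omat (w v : ℝ) (z : ℂ) : Matrix (Fin 2) (Fin 2) ℂ :=
  !![1, 0; -(z * (w : ℂ) + z ^ 2 * (v : ℂ)), 1]

/-- The value `(φ₋(z, x_N+), φ₋'(z, x_N+))` obtained by propagating the initial data
`(e^{x_0/2}, (1/2) e^{x_0/2})` through all the point interactions (0-indexed data). -/
noncomputable def transVec (N : ℕ) (x w v : ℕ → ℝ) (z : ℂ) : Fin 2 → ℂ :=
  Matrix.mulVec
    ((((List.range (N - 1)).reverse.map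
        (fun j => Omat (w (j + 1)) (v (j + 1)) z * Tmat (x (j + 1) - x j))).prod)
      * Omat (w 0) (v 0) z)
    ![Complex.exp ((x 0 : ℂ) / 2), (1 / 2) * Complex.exp ((x 0 : ℂ) / 2)]

/-- The Wronskian polynomial `W(z)` of the generalized spectral problem
`-f'' + (1/4) f = z ω f + z² υ f` (`W ≡ 1` when `N = 0`). -/
noncomputable def Wron (N : ℕ) (x w v : ℕ → ℝ) (z : ℂ) : ℂ :=
  if N = 0 then 1
  else Complex.exp (-(x (N - 1) : ℂ) / 2) *
    (transVec N x w v z 1 + (1 / 2) * transVec N x w v z 0)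

/-- The Weyl--Titchmarsh function `M(z)`. -/
noncomputable def WeylM (N : ℕ) (x w v : ℕ → ℝ) (z : ℂ) : ℂ :=
  Complex.exp ((x (N - 1) : ℂ) / 2) *
    ((1 / 2) * transVec N x w v z 0 - transVec N x w v z 1) / Wron N x w v z

/-- `f` (with distributional derivative represented by `f'`) is a solution at `z` of the
generalized spectral problem `-f'' + (1/4) f = z ω f + z² υ f` with
`ω = Σ_{n<N} w n δ_{x n}`, `υ = Σ_{n<N} v n δ_{x n}`: it is continuous, twice differentiable
away from the points `x n` with `f'' = (1/4) f` there, and the one-sided limits of `f'` at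
each `x n` exist and satisfy the jump condition
`f'(x_n+) - f'(x_n-) = -(z w_n + z² v_n) f (x_n)`. -/
def IsSol (N : ℕ) (x w v : ℕ → ℝ) (z : ℂ) (f f' : ℝ → ℂ) : Prop :=
  Continuous f ∧
  (∀ t : ℝ, (∀ n < N, t ≠ x n) →
    HasDerivAt f (f' t) t ∧ HasDerivAt f' ((1 / 4) * f t) t) ∧
  (∀ n < N, ∃ L R : ℂ,
    Filter.Tendsto f' (nhdsWithin (x n) (Set.Iio (x n))) (nhds L) ∧
    Filter.Tendsto f' (nhdsWithin (x n) (Set.Ioi (x n))) (nhds R) ∧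
    R - L = -(z * (w n : ℂ) + z ^ 2 * (v n : ℂ)) * f (x n))

noncomputable def cpol (a b : ℝ) : Polynomial ℂ := C (a:ℂ) * X + C (b:ℂ) * X^2

noncomputable def AB (x w v : ℕ → ℝ) : ℕ → Polynomial ℂ × Polynomial ℂ
  | 0 => (1, 0)
  | n+1 =>
    ((AB x w v n).1 - cpol (w n) (v n) *
        ((AB x w v n).1 + C (Complex.exp (-(x n:ℂ))) * (AB x w v n).2),
     (AB x w v n).2 + cpol (w n) (v n) *
        (C (Complex.exp ((x n:ℂ))) * (AB x w v n).1 + (AB x w v n).2))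

lemma Omat_mulVec (a b : ℝ) (z : ℂ) (p q : ℂ) :
    (Omat a b z).mulVec ![p, q] = ![p, q - (z*(a:ℂ) + z^2*(b:ℂ)) * p] := by
  funext i
  fin_cases i <;>
    simp [Omat, Matrix.mulVec, dotProduct, Fin.sum_univ_two] <;> ring

lemma Tmat_mulVec (d y : ℝ) (A B : ℂ) :
    (Tmat d).mulVec ![A * Complex.exp ((y:ℂ)/2) + B * Complex.exp (-(y:ℂ)/2),
      (A * Complex.exp ((y:ℂ)/2) - B * Complex.exp (-(y:ℂ)/2)) / 2] =
    ![A * Complex.exp (((y+d : ℝ):ℂ)/2) + B * Complex.exp (-((y+d : ℝ):ℂ)/2),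
      (A * Complex.exp (((y+d : ℝ):ℂ)/2) - B * Complex.exp (-((y+d : ℝ):ℂ)/2)) / 2] := by
  have h1 : Complex.exp (((y+d : ℝ):ℂ)/2) = Complex.exp ((y:ℂ)/2) * Complex.exp ((d:ℂ)/2) := by
    rw [← Complex.exp_add]; push_cast; ring_nf
  have h2 : Complex.exp (-((y+d : ℝ):ℂ)/2) =
      Complex.exp (-(y:ℂ)/2) * Complex.exp (-(d:ℂ)/2) := by
    rw [← Complex.exp_add]; push_cast; ring_nf
  have h3 : Complex.cosh ((d:ℂ)/2) = (Complex.exp ((d:ℂ)/2) + Complex.exp (-(d:ℂ)/2))/2 := by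
    rw [Complex.cosh]; ring_nf
  have h4 : Complex.sinh ((d:ℂ)/2) = (Complex.exp ((d:ℂ)/2) - Complex.exp (-(d:ℂ)/2))/2 := by
    rw [Complex.sinh]; ring_nf
  funext i
  fin_cases i <;>
  · simp [Tmat, Matrix.mulVec, dotProduct, Fin.sum_univ_two, h1, h2, h3, h4]
    rw [show ((y:ℂ)+(d:ℂ))/2 = (y:ℂ)/2 + (d:ℂ)/2 by ring,
      show ((-(d:ℂ)) + -(y:ℂ))/2 = -(y:ℂ)/2 + -(d:ℂ)/2 by ring,
      Complex.exp_add, Complex.exp_add]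
    ring


lemma expP (t : ℂ) : Complex.exp t = Complex.exp (t/2) ^ 2 := by
  rw [sq, ← Complex.exp_add]; ring_nf

lemma expI (t : ℂ) : Complex.exp (-t/2) = (Complex.exp (t/2))⁻¹ := by
  rw [← Complex.exp_neg]; ring_nf

lemma expM (t : ℂ) : Complex.exp (-t) = (Complex.exp (t/2) ^ 2)⁻¹ := by
  rw [← expP, ← Complex.exp_neg]

lemma state_eq (x w v : ℕ → ℝ) (z : ℂ) (n : ℕ) :
    Matrix.mulVec
      ((((List.range n).reverse.map
          (fun j => Omat (w (j+1)) (v (j+1)) z * Tmat (x (j+1) - x j))).prod)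
        * Omat (w 0) (v 0) z)
      ![Complex.exp ((x 0 : ℂ) / 2), (1 / 2) * Complex.exp ((x 0 : ℂ) / 2)] =
    ![((AB x w v (n+1)).1.eval z) * Complex.exp ((x n:ℂ)/2)
        + ((AB x w v (n+1)).2.eval z) * Complex.exp (-(x n:ℂ)/2),
      (((AB x w v (n+1)).1.eval z) * Complex.exp ((x n:ℂ)/2)
        - ((AB x w v (n+1)).2.eval z) * Complex.exp (-(x n:ℂ)/2)) / 2] := by
  induction n with
  | zero =>
      simp only [List.range_zero, List.reverse_nil, List.map_nil, List.prod_nil, one_mul]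
      rw [show (![Complex.exp ((x 0 : ℂ) / 2), (1 / 2) * Complex.exp ((x 0 : ℂ) / 2)] :
          Fin 2 → ℂ) = ![Complex.exp ((x 0 : ℂ) / 2), Complex.exp ((x 0 : ℂ) / 2) / 2] by
        funext i; fin_cases i <;> simp <;> ring]
      rw [Omat_mulVec]
      funext i
      fin_cases i <;>
      · simp [AB, cpol]
        rw [expP ((x 0 : ℂ)), expI ((x 0 : ℂ))]
        field_simp [Complex.exp_ne_zero]
        ring
  | succ m ih =>
      have hlist : ((List.range (m+1)).reverse.map
          (fun j => Omat (w (j+1)) (v (j+1)) z * Tmat (x (j+1) - x j))).prod =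
          (Omat (w (m+1)) (v (m+1)) z * Tmat (x (m+1) - x m)) *
          ((List.range m).reverse.map
            (fun j => Omat (w (j+1)) (v (j+1)) z * Tmat (x (j+1) - x j))).prod := by
        rw [List.range_succ, List.reverse_append]
        simp
      rw [hlist, mul_assoc, mul_assoc, ← Matrix.mulVec_mulVec, ← Matrix.mulVec_mulVec,
        Matrix.mulVec_mulVec, ih]
      have hTd := Tmat_mulVec (x (m+1) - x m) (x m)
        ((AB x w v (m+1)).1.eval z) ((AB x w v (m+1)).2.eval z)
      rw [show x m + (x (m+1) - x m) = x (m+1) by ring] at hTd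
      rw [← Matrix.mulVec_mulVec, hTd, Omat_mulVec]
      funext i
      fin_cases i <;>
      · simp [AB, cpol]
        rw [expP ((x (m+1) : ℂ)), expM ((x (m+1) : ℂ)), expI ((x (m+1) : ℂ))]
        field_simp [Complex.exp_ne_zero]
        ring

lemma cpol_coeff0 (a b : ℝ) : (cpol a b).coeff 0 = 0 := by simp [cpol]
lemma cpol_coeff1 (a b : ℝ) : (cpol a b).coeff 1 = (a:ℂ) := by
  simp [cpol, Polynomial.coeff_X_pow]
lemma cpol_coeff2 (a b : ℝ) : (cpol a b).coeff 2 = (b:ℂ) := by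
  simp [cpol, Polynomial.coeff_X_pow, Polynomial.coeff_X]

lemma mul_c0 (p q : Polynomial ℂ) : (p * q).coeff 0 = p.coeff 0 * q.coeff 0 :=
  Polynomial.mul_coeff_zero p q

lemma mul_c1 (p q : Polynomial ℂ) :
    (p * q).coeff 1 = p.coeff 0 * q.coeff 1 + p.coeff 1 * q.coeff 0 := by
  rw [Polynomial.coeff_mul, Finset.Nat.sum_antidiagonal_eq_sum_range_succ_mk]
  simp [Finset.sum_range_succ]

lemma mul_c2 (p q : Polynomial ℂ) :
    (p * q).coeff 2 = p.coeff 0 * q.coeff 2 + p.coeff 1 * q.coeff 1 + p.coeff 2 * q.coeff 0 := by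
  rw [Polynomial.coeff_mul, Finset.Nat.sum_antidiagonal_eq_sum_range_succ_mk]
  simp [Finset.sum_range_succ]

lemma AB_coeffs (x w v : ℕ → ℝ) (n : ℕ) :
    (AB x w v n).1.coeff 0 = 1 ∧
    (AB x w v n).2.coeff 0 = 0 ∧
    (AB x w v n).1.coeff 1 = -∑ k ∈ Finset.range n, (w k : ℂ) ∧
    (AB x w v n).2.coeff 1 = ∑ k ∈ Finset.range n, (w k:ℂ) * Complex.exp ((x k:ℂ)) ∧
    (AB x w v n).1.coeff 2 = ∑ k ∈ Finset.range n,
      (-(v k:ℂ) - (w k:ℂ) * (-(∑ j ∈ Finset.range k, (w j:ℂ))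
        + (∑ j ∈ Finset.range k, (w j:ℂ) * Complex.exp ((x j:ℂ)))
          * Complex.exp (-(x k:ℂ)))) := by
  induction n with
  | zero => simp [AB, Polynomial.coeff_one]
  | succ m ih =>
      obtain ⟨h1, h2, h3, h4, h5⟩ := ih
      refine ⟨?_, ?_, ?_, ?_, ?_⟩ <;>
        simp only [AB, Polynomial.coeff_sub, Polynomial.coeff_add, mul_c0, mul_c1, mul_c2,
          cpol_coeff0, cpol_coeff1, cpol_coeff2, Polynomial.coeff_C_mul,
          h1, h2, h3, h4, h5, Finset.sum_range_succ] <;>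
        try ring

lemma Wron_eq (N : ℕ) (hN : 1 ≤ N) (x w v : ℕ → ℝ) (z : ℂ) :
    Wron N x w v z = (AB x w v N).1.eval z := by
  obtain ⟨m, rfl⟩ : ∃ m, N = m + 1 := ⟨N - 1, (Nat.succ_pred_eq_of_pos hN).symm⟩
  have hE : Complex.exp ((x m:ℂ)/2) * Complex.exp (-(x m:ℂ)/2) = 1 := by
    rw [← Complex.exp_add]; ring_nf; exact Complex.exp_zero
  unfold Wron transVec
  rw [if_neg (Nat.succ_ne_zero m)]
  simp only [Nat.add_sub_cancel]
  rw [state_eq]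
  simp only [Matrix.cons_val_one, Matrix.head_cons, Matrix.cons_val_zero]
  rw [show -(x m : ℂ)/2 = -((x m:ℂ))/2 by ring]
  linear_combination ((AB x w v (m+1)).1.eval z) * hE

lemma sum_square_split (M : ℕ) (f : ℕ → ℕ → ℂ) :
    ∑ n ∈ Finset.range M, ∑ k ∈ Finset.range M, f n k =
    ∑ n ∈ Finset.range M, (f n n + ∑ k ∈ Finset.range n, (f n k + f k n)) := by
  induction M with
  | zero => simp
  | succ m ih =>
      simp only [Finset.sum_range_succ, Finset.sum_add_distrib] at *
      rw [ih]
      ring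

lemma final_alg (N : ℕ) (x w : ℕ → ℝ)
    (hx : ∀ i j, i < j → j < N → x i < x j) :
    ∑ n ∈ Finset.range N, ∑ k ∈ Finset.range N,
      ((Complex.exp (-(|x n - x k| : ℝ) : ℂ) - 1) * (w n : ℂ) * (w k : ℂ)) =
    ∑ n ∈ Finset.range N, (2 * (w n:ℂ) * (-(∑ j ∈ Finset.range n, (w j:ℂ))
        + (∑ j ∈ Finset.range n, (w j:ℂ) * Complex.exp ((x j:ℂ)))
          * Complex.exp (-(x n:ℂ)))) := by
  rw [sum_square_split]
  refine Finset.sum_congr rfl (fun n hn => ?_)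
  rw [Finset.mem_range] at hn
  have hdiag : (Complex.exp (-(|x n - x n| : ℝ) : ℂ) - 1) * (w n : ℂ) * (w n : ℂ) = 0 := by
    simp
  rw [hdiag, zero_add]
  have key : ∀ k ∈ Finset.range n,
      ((Complex.exp (-(|x n - x k| : ℝ) : ℂ) - 1) * (w n : ℂ) * (w k : ℂ)
        + (Complex.exp (-(|x k - x n| : ℝ) : ℂ) - 1) * (w k : ℂ) * (w n : ℂ)) =
      2 * (w n:ℂ) * (-(w k:ℂ) + ((w k:ℂ) * Complex.exp ((x k:ℂ))) * Complex.exp (-(x n:ℂ))) := by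
    intro k hk
    rw [Finset.mem_range] at hk
    have habs : |x n - x k| = x n - x k := abs_of_pos (sub_pos.2 (hx k n hk hn))
    have habs2 : |x k - x n| = x n - x k := by rw [abs_sub_comm]; exact habs
    rw [habs, habs2]
    have hexp : (Complex.exp (-(x n - x k : ℝ) : ℂ)) =
        Complex.exp ((x k:ℂ)) * Complex.exp (-(x n:ℂ)) := by
      rw [← Complex.exp_add]; push_cast; ring_nf
    rw [hexp]
    ring
  rw [Finset.sum_congr rfl key, ← Finset.mul_sum]
  congr 1
  rw [Finset.sum_add_distrib, ← Finset.sum_mul]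
  simp


/-- `W(0) = 1`, `-W'(0) = Σ ω_n` and
`-W''(0) = Σ_n Σ_k (e^{-|x_n - x_k|} - 1) ω_n ω_k + 2 Σ_n υ_n`. -/
theorem stmt_5 (N : ℕ) (hN : 1 ≤ N) (x w v : ℕ → ℝ)
    (hx : ∀ i j, i < j → j < N → x i < x j)
    (hv : ∀ n, n < N → 0 ≤ v n) (hnd : ∀ n, n < N → 0 < |w n| + v n) :
    Wron N x w v 0 = 1 ∧
    -deriv (Wron N x w v) 0 = ((∑ n ∈ Finset.range N, w n : ℝ) : ℂ) ∧
    -deriv (deriv (Wron N x w v)) 0 =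
      ((∑ n ∈ Finset.range N, ∑ k ∈ Finset.range N,
          (Real.exp (-|x n - x k|) - 1) * w n * w k
        + 2 * ∑ n ∈ Finset.range N, v n : ℝ) : ℂ) := by
  have hfun : Wron N x w v = fun z => (AB x w v N).1.eval z :=
    funext (fun z => Wron_eq N hN x w v z)
  obtain ⟨h1, h2, h3, h4, h5⟩ := AB_coeffs x w v N
  have hd1 : deriv (Wron N x w v) = fun z => (derivative (AB x w v N).1).eval z := by
    funext t; rw [hfun]; exact Polynomial.deriv _
  refine ⟨?_, ?_, ?_⟩
  · rw [hfun]
    simpa [← Polynomial.coeff_zero_eq_eval_zero] using h1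
  · rw [hd1]
    simp only
    rw [← Polynomial.coeff_zero_eq_eval_zero, Polynomial.coeff_derivative, h3]
    push_cast
    ring
  · rw [hd1]
    rw [show deriv (fun z => (derivative (AB x w v N).1).eval z) 0 =
        (derivative (derivative (AB x w v N).1)).eval 0 from Polynomial.deriv _]
    rw [← Polynomial.coeff_zero_eq_eval_zero, Polynomial.coeff_derivative,
      Polynomial.coeff_derivative, h5]
    push_cast
    rw [final_alg N x w hx, Finset.mul_sum, ← Finset.sum_add_distrib, Finset.sum_mul,
      Finset.sum_mul, ← neg_one_mul, Finset.mul_sum]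
    exact Finset.sum_congr rfl (fun n hn => by ring)
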